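/- arXiv:1506.01610 — 2 statements merged into one kernel-verified Lean document; each statement's English description precedes it below -/
import Mathlib

section
/- Let H be an n×n real symmetric matrix with eigenvalues λ_1 ≤ ⋯ ≤ λ_n (counted with multiplicity) and corresponding orthonormal eigenvectors φ_1, …, φ_n, let 1 ≤ N < n, β > 0, and let μ ∈ ℝ satisfy Σ_{i=1}^n (1 + exp(β(λ_i − μ)))⁻¹ = N. Set ρ_i = (1 + exp(β(λ_i − μ)))⁻¹ and P_{β,∞} = Σ_{i=1}^n ρ_i φ_iφ_iᵀ. If η > 0 and P_{β,η} ∈ C_N minimizes P ↦ E_β(P) + η⁻¹‖P‖₁ over C_N, then 0 ≤ E_β(P_{β,η}) − E_β(P_{β,∞}) ≤ η⁻¹‖P_{β,∞}‖₁. -/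
open Matrix BigOperators Real

noncomputable def fd (x : ℝ) : ℝ := x * Real.log x + (1 - x) * Real.log (1 - x)

lemma fd_convex : ConvexOn ℝ (Set.Icc (0:ℝ) 1) fd := by
  have h1 : ConvexOn ℝ (Set.Icc (0:ℝ) 1) (fun x => x * Real.log x) :=
    Real.convexOn_mul_log.subset (fun x hx => hx.1) (convex_Icc 0 1)
  have h0 : ConvexOn ℝ (⇑(AffineMap.lineMap (1:ℝ) (0:ℝ)) ⁻¹' Set.Ici 0)
      ((fun x => x * Real.log x) ∘ ⇑(AffineMap.lineMap (1:ℝ) (0:ℝ))) :=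
    Real.convexOn_mul_log.comp_affineMap (AffineMap.lineMap (1:ℝ) (0:ℝ))
  have h2 : ConvexOn ℝ (Set.Icc (0:ℝ) 1) (fun x => (1-x) * Real.log (1-x)) := by
    have h2' := h0.subset (s := Set.Icc (0:ℝ) 1) ?_ (convex_Icc 0 1)
    · exact h2'.congr (fun x _ => by simp [AffineMap.lineMap_apply_ring])
    · intro x hx
      simp only [Set.mem_Icc] at hx
      simp only [Set.mem_preimage, AffineMap.lineMap_apply_ring, Set.mem_Ici]
      nlinarith [hx.1, hx.2]
  exact h1.add h2

lemma sub_le_mul_log_sub {x y : ℝ} (hx : 0 < x) (hy : 0 < y) :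
    x - y ≤ x * (Real.log x - Real.log y) := by
  have h := Real.log_le_sub_one_of_pos (div_pos hy hx)
  rw [Real.log_div (ne_of_gt hy) (ne_of_gt hx)] at h
  have h2 := mul_le_mul_of_nonneg_left h (le_of_lt hx)
  have hxy : x * (y / x) = y := by field_simp
  nlinarith

lemma fd_eq_at_rho (a : ℝ) :
    a * (1 + Real.exp a)⁻¹ + fd ((1 + Real.exp a)⁻¹) = -Real.log (1 + Real.exp (-a)) := by
  have hea : 0 < Real.exp a := Real.exp_pos a
  have h1 : (0:ℝ) < 1 + Real.exp a := by linarith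
  set ρ : ℝ := (1 + Real.exp a)⁻¹ with hρ
  have hρpos : 0 < ρ := inv_pos.mpr h1
  have hone : 1 - ρ = Real.exp a / (1 + Real.exp a) := by
    rw [hρ]; field_simp; ring
  have hlogρ : Real.log ρ = -Real.log (1 + Real.exp a) := by
    rw [hρ, Real.log_inv]
  have hlog1ρ : Real.log (1 - ρ) = a - Real.log (1 + Real.exp a) := by
    rw [hone, Real.log_div (ne_of_gt hea) (ne_of_gt h1), Real.log_exp]
  have hneg : Real.log (1 + Real.exp (-a)) = Real.log (1 + Real.exp a) - a := by
    have : 1 + Real.exp (-a) = (1 + Real.exp a) * Real.exp (-a) := by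
      rw [add_mul, one_mul, ← Real.exp_add]
      simp [add_comm]
    rw [this, Real.log_mul (ne_of_gt h1) (ne_of_gt (Real.exp_pos _)), Real.log_exp]
    ring
  rw [fd, hlogρ, hlog1ρ, hneg]
  ring

lemma key_scalar (a : ℝ) {p : ℝ} (hp0 : 0 ≤ p) (hp1 : p ≤ 1) :
    -Real.log (1 + Real.exp (-a)) ≤ a * p + fd p := by
  have hea : 0 < Real.exp a := Real.exp_pos a
  have hena : 0 < Real.exp (-a) := Real.exp_pos (-a)
  have h1 : (0:ℝ) < 1 + Real.exp a := by linarith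
  rcases eq_or_lt_of_le hp0 with h0 | h0
  · -- p = 0
    rw [← h0]
    simp [fd]
    have : (0:ℝ) ≤ Real.log (1 + Real.exp (-a)) :=
      Real.log_nonneg (by linarith)
    linarith
  rcases eq_or_lt_of_le hp1 with h1' | h1'
  · -- p = 1
    rw [h1']
    simp [fd]
    have : -a ≤ Real.log (1 + Real.exp (-a)) := by
      calc -a = Real.log (Real.exp (-a)) := (Real.log_exp _).symm
        _ ≤ Real.log (1 + Real.exp (-a)) := Real.log_le_log (Real.exp_pos _) (by linarith)
    linarith
  · -- 0 < p < 1
    set ρ : ℝ := (1 + Real.exp a)⁻¹ with hρ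
    have hρpos : 0 < ρ := inv_pos.mpr h1
    have hρlt : ρ < 1 := by
      rw [hρ, inv_lt_one_iff₀]
      right; linarith
    have t1 : p - ρ ≤ p * (Real.log p - Real.log ρ) := sub_le_mul_log_sub h0 hρpos
    have t2 : (1-p) - (1-ρ) ≤ (1-p) * (Real.log (1-p) - Real.log (1-ρ)) :=
      sub_le_mul_log_sub (by linarith) (by linarith)
    have heq := fd_eq_at_rho a
    rw [← hρ] at heq
    have hlogρ : Real.log ρ = -Real.log (1 + Real.exp a) := by
      rw [hρ, Real.log_inv]
    -- a ρ + fd ρ = -log(1+exp(-a)); and f p + a p - (f ρ + a ρ) = t1 + t2 expression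
    have expand : a * p + fd p - (a * ρ + fd ρ)
        = p * (Real.log p - Real.log ρ) + (1-p) * (Real.log (1-p) - Real.log (1-ρ)) := by
      have hlog1ρ : Real.log (1 - ρ) = a - Real.log (1 + Real.exp a) := by
        have hone : 1 - ρ = Real.exp a / (1 + Real.exp a) := by rw [hρ]; field_simp; ring
        rw [hone, Real.log_div (ne_of_gt hea) (ne_of_gt h1), Real.log_exp]
      rw [fd, fd, hlogρ, hlog1ρ]
      ring
    linarith

lemma jensen_transfer {n : ℕ} (W : Matrix (Fin n) (Fin n) ℝ)
    (h1 : Wᵀ * W = 1) (h2 : W * Wᵀ = 1)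
    (d : Fin n → ℝ) (hd0 : ∀ i, 0 ≤ d i) (hd1 : ∀ i, d i ≤ 1) :
    ∑ k, fd (∑ i, d i * (W i k)^2) ≤ ∑ i, fd (d i) := by
  have col : ∀ k, ∑ i, (W i k)^2 = 1 := by
    intro k
    have := congrFun (congrFun h1 k) k
    simpa [Matrix.mul_apply, Matrix.one_apply, pow_two] using this
  have row : ∀ i, ∑ k, (W i k)^2 = 1 := by
    intro i
    have := congrFun (congrFun h2 i) i
    simpa [Matrix.mul_apply, Matrix.one_apply, pow_two] using this
  have step : ∀ k, fd (∑ i, d i * (W i k)^2) ≤ ∑ i, (W i k)^2 * fd (d i) := by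
    intro k
    have := fd_convex.map_sum_le (t := Finset.univ) (w := fun i => (W i k)^2)
      (p := d) (fun i _ => sq_nonneg _) (col k) (fun i _ => ⟨hd0 i, hd1 i⟩)
    simpa [smul_eq_mul, mul_comm] using this
  calc ∑ k, fd (∑ i, d i * (W i k)^2) ≤ ∑ k, ∑ i, (W i k)^2 * fd (d i) :=
        Finset.sum_le_sum (fun k _ => step k)
    _ = ∑ i, (∑ k, (W i k)^2) * fd (d i) := by
        rw [Finset.sum_comm]
        simp [Finset.sum_mul]
    _ = ∑ i, fd (d i) := by
        simp only [row, one_mul]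

lemma real_conjTranspose_eq_transpose {n : ℕ} (A : Matrix (Fin n) (Fin n) ℝ) : Aᴴ = Aᵀ := by
  ext i j; simp [Matrix.conjTranspose_apply]

lemma quad_diag_nonneg {n : ℕ} {M : Matrix (Fin n) (Fin n) ℝ} (hM : M.PosSemidef)
    (A : Matrix (Fin n) (Fin n) ℝ) (i : Fin n) : 0 ≤ (Aᵀ * M * A) i i := by
  have h := hM.conjTranspose_mul_mul_same A
  rw [real_conjTranspose_eq_transpose] at h
  have h2 := h.dotProduct_mulVec_nonneg (Pi.single i 1)
  simpa [dotProduct, Matrix.mulVec, Pi.single_apply, Finset.mul_sum] using h2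

lemma diag_conj_entry {n : ℕ} (B : Matrix (Fin n) (Fin n) ℝ) (d : Fin n → ℝ) (i : Fin n) :
    (Bᵀ * Matrix.diagonal d * B) i i = ∑ k, d k * (B k i)^2 := by
  rw [Matrix.mul_apply]
  refine Finset.sum_congr rfl (fun k _ => ?_)
  rw [Matrix.mul_diagonal]
  simp [Matrix.transpose_apply, pow_two]
  ring



/-- Entrywise ℓ¹ norm of a real matrix. -/
noncomputable def l1Norm {n : ℕ} (P : Matrix (Fin n) (Fin n) ℝ) : ℝ :=
  ∑ i, ∑ j, |P i j|

open scoped Classical in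
/-- The Fermi–Dirac entropy `S(P) = ∑_i (σ_i ln σ_i + (1−σ_i) ln(1−σ_i))` of a
symmetric matrix, computed from its eigenvalues `σ_i` (with `0 ln 0 = 0`,
which holds automatically since `Real.log 0 = 0`). -/
noncomputable def matEntropy {n : ℕ} (P : Matrix (Fin n) (Fin n) ℝ) : ℝ :=
  if h : P.IsHermitian then
    ∑ i, (h.eigenvalues i * Real.log (h.eigenvalues i) +
      (1 - h.eigenvalues i) * Real.log (1 - h.eigenvalues i))
  else 0

/-- The free energy at inverse temperature `β`:
`E_β(P) = tr(HP) + β⁻¹ S(P)`. -/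
noncomputable def freeEnergy {n : ℕ} (β : ℝ) (H P : Matrix (Fin n) (Fin n) ℝ) : ℝ :=
  (H * P).trace + β⁻¹ * matEntropy P

lemma eigU_facts {n : ℕ} {P : Matrix (Fin n) (Fin n) ℝ} (hP : P.IsHermitian) :
    (hP.eigenvectorUnitary : Matrix (Fin n) (Fin n) ℝ)ᵀ *
        (hP.eigenvectorUnitary : Matrix (Fin n) (Fin n) ℝ) = 1 ∧
    (hP.eigenvectorUnitary : Matrix (Fin n) (Fin n) ℝ) *
        (hP.eigenvectorUnitary : Matrix (Fin n) (Fin n) ℝ)ᵀ = 1 ∧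
    (hP.eigenvectorUnitary : Matrix (Fin n) (Fin n) ℝ)ᵀ * P *
        (hP.eigenvectorUnitary : Matrix (Fin n) (Fin n) ℝ) = Matrix.diagonal hP.eigenvalues := by
  have hst : ((hP.eigenvectorUnitary : Matrix (Fin n) (Fin n) ℝ))ᴴ
      = (hP.eigenvectorUnitary : Matrix (Fin n) (Fin n) ℝ)ᵀ := by ext i j; simp
  refine ⟨?_, ?_, ?_⟩
  · have := Matrix.mem_unitaryGroup_iff'.mp hP.eigenvectorUnitary.2
    rwa [Matrix.star_eq_conjTranspose, hst] at this
  · have := Matrix.mem_unitaryGroup_iff.mp hP.eigenvectorUnitary.2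
    rwa [Matrix.star_eq_conjTranspose, hst] at this
  · have h : (star (hP.eigenvectorUnitary : Matrix (Fin n) (Fin n) ℝ)) * P *
        (hP.eigenvectorUnitary : Matrix (Fin n) (Fin n) ℝ)
        = Matrix.diagonal (RCLike.ofReal ∘ hP.eigenvalues) := by
      have := hP.conjStarAlgAut_star_eigenvectorUnitary
      rwa [Unitary.conjStarAlgAut_star_apply] at this
    rw [Matrix.star_eq_conjTranspose, hst] at h
    simpa using h

lemma matEntropy_eq {n : ℕ} {P : Matrix (Fin n) (Fin n) ℝ} (hP : P.IsHermitian) :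
    matEntropy P = ∑ i, fd (hP.eigenvalues i) := by
  rw [matEntropy, dif_pos hP]
  rfl

lemma matEntropy_le {n : ℕ} {P Φ : Matrix (Fin n) (Fin n) ℝ} {d : Fin n → ℝ}
    (hΦ1 : Φᵀ * Φ = 1) (hΦ2 : Φ * Φᵀ = 1)
    (hd0 : ∀ i, 0 ≤ d i) (hd1 : ∀ i, d i ≤ 1)
    (hPd : P = Φ * Matrix.diagonal d * Φᵀ) (hP : P.IsHermitian) :
    matEntropy P ≤ ∑ i, fd (d i) := by
  obtain ⟨hU1, hU2, hdiag⟩ := eigU_facts hP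
  set U : Matrix (Fin n) (Fin n) ℝ := (hP.eigenvectorUnitary : Matrix (Fin n) (Fin n) ℝ)
  rw [matEntropy_eq hP]
  set W : Matrix (Fin n) (Fin n) ℝ := Φᵀ * U with hW
  have hW1 : Wᵀ * W = 1 := by
    rw [hW, Matrix.transpose_mul, Matrix.transpose_transpose]
    calc Uᵀ * Φ * (Φᵀ * U) = Uᵀ * (Φ * Φᵀ) * U := by
          simp only [Matrix.mul_assoc]
      _ = 1 := by rw [hΦ2, Matrix.mul_one, hU1]
  have hW2 : W * Wᵀ = 1 := by
    rw [hW, Matrix.transpose_mul, Matrix.transpose_transpose]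
    calc Φᵀ * U * (Uᵀ * Φ) = Φᵀ * (U * Uᵀ) * Φ := by
          simp only [Matrix.mul_assoc]
      _ = 1 := by rw [hU2, Matrix.mul_one, hΦ1]
  have heigval : ∀ k, hP.eigenvalues k = ∑ i, d i * (W i k)^2 := by
    intro k
    have : Matrix.diagonal hP.eigenvalues = Wᵀ * Matrix.diagonal d * W := by
      rw [← hdiag, hPd, hW, Matrix.transpose_mul, Matrix.transpose_transpose]
      simp only [Matrix.mul_assoc]
    have h2 := congrFun (congrFun this k) k
    rw [Matrix.diagonal_apply_eq, diag_conj_entry] at h2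
    exact h2
  calc ∑ k, fd (hP.eigenvalues k) = ∑ k, fd (∑ i, d i * (W i k)^2) := by
        refine Finset.sum_congr rfl (fun k _ => by rw [heigval k])
    _ ≤ ∑ i, fd (d i) := jensen_transfer W hW1 hW2 d hd0 hd1

lemma matEntropy_ge {n : ℕ} {P Φ : Matrix (Fin n) (Fin n) ℝ}
    (hΦ1 : Φᵀ * Φ = 1) (hΦ2 : Φ * Φᵀ = 1)
    (hP : P.IsHermitian) (hpsd : P.PosSemidef)
    (hpsd1 : ((1 : Matrix (Fin n) (Fin n) ℝ) - P).PosSemidef) :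
    ∑ i, fd ((Φᵀ * P * Φ) i i) ≤ matEntropy P := by
  obtain ⟨hU1, hU2, hdiag⟩ := eigU_facts hP
  set U : Matrix (Fin n) (Fin n) ℝ := (hP.eigenvectorUnitary : Matrix (Fin n) (Fin n) ℝ)
  rw [matEntropy_eq hP]
  set e := hP.eigenvalues with he
  clear_value e
  set W : Matrix (Fin n) (Fin n) ℝ := Uᵀ * Φ with hW
  have hW1 : Wᵀ * W = 1 := by
    rw [hW, Matrix.transpose_mul, Matrix.transpose_transpose]
    calc Φᵀ * U * (Uᵀ * Φ) = Φᵀ * (U * Uᵀ) * Φ := by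
          simp only [Matrix.mul_assoc]
      _ = 1 := by rw [hU2, Matrix.mul_one, hΦ1]
  have hW2 : W * Wᵀ = 1 := by
    rw [hW, Matrix.transpose_mul, Matrix.transpose_transpose]
    calc Uᵀ * Φ * (Φᵀ * U) = Uᵀ * (Φ * Φᵀ) * U := by
          simp only [Matrix.mul_assoc]
      _ = 1 := by rw [hΦ2, Matrix.mul_one, hU1]
  have hd0 : ∀ k, 0 ≤ e k := by
    intro k
    have := quad_diag_nonneg hpsd U k
    rw [hdiag, Matrix.diagonal_apply_eq] at this
    exact this
  have hd1 : ∀ k, e k ≤ 1 := by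
    intro k
    have h := quad_diag_nonneg hpsd1 U k
    have hexp : Uᵀ * (1 - P) * U = 1 - Matrix.diagonal e := by
      rw [Matrix.mul_sub, Matrix.sub_mul, Matrix.mul_one, hU1, hdiag]
    rw [hexp] at h
    have : ((1 : Matrix (Fin n) (Fin n) ℝ) - Matrix.diagonal e) k k
        = 1 - e k := by
      simp [Matrix.one_apply, Matrix.diagonal_apply_eq]
    rw [this] at h
    linarith
  have hPU : P = U * Matrix.diagonal e * Uᵀ := by
    rw [← hdiag]
    calc P = (U * Uᵀ) * P * (U * Uᵀ) := by rw [hU2]; simp [Matrix.mul_assoc]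
      _ = U * (Uᵀ * P * U) * Uᵀ := by simp only [Matrix.mul_assoc]
  have hentry : ∀ i, (Φᵀ * P * Φ) i i = ∑ k, e k * (W k i)^2 := by
    intro i
    rw [← diag_conj_entry W e i]
    congr 1
    rw [hPU, hW, Matrix.transpose_mul, Matrix.transpose_transpose]
    simp only [Matrix.mul_assoc]
  calc ∑ i, fd ((Φᵀ * P * Φ) i i) = ∑ i, fd (∑ k, e k * (W k i)^2) := by
        refine Finset.sum_congr rfl (fun i _ => by rw [hentry i])
    _ ≤ ∑ k, fd (e k) := jensen_transfer W hW1 hW2 _ hd0 hd1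


/-- The convex set of admissible density matrices: symmetric, trace `N`,
with both `P` and `1 - P` positive semidefinite. -/
def CN (n N : ℕ) : Set (Matrix (Fin n) (Fin n) ℝ) :=
  {P | P.IsSymm ∧ P.trace = (N : ℝ) ∧ P.PosSemidef ∧
    ((1 : Matrix (Fin n) (Fin n) ℝ) - P).PosSemidef}

/-- Free-energy approximation at finite temperature:
`0 ≤ E_β(P_{β,η}) − E_β(P_{β,∞}) ≤ η⁻¹ ‖P_{β,∞}‖₁`. -/
theorem stmt7 {n N : ℕ} (hN1 : 1 ≤ N) (hNn : N < n)
    (H : Matrix (Fin n) (Fin n) ℝ) (hH : H.IsSymm)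
    (lam : Fin n → ℝ) (hmono : Monotone lam)
    (φ : Fin n → Fin n → ℝ)
    (horth : ∀ i j, φ i ⬝ᵥ φ j = if i = j then (1 : ℝ) else 0)
    (heig : ∀ i, H.mulVec (φ i) = lam i • φ i)
    (β : ℝ) (hβ : 0 < β) (μ : ℝ)
    (hμ : ∑ i, (1 + Real.exp (β * (lam i - μ)))⁻¹ = (N : ℝ))
    (ρ : Fin n → ℝ) (hρ : ∀ i, ρ i = (1 + Real.exp (β * (lam i - μ)))⁻¹)
    (Pβ : Matrix (Fin n) (Fin n) ℝ)
    (hPβ : Pβ = ∑ i, ρ i • vecMulVec (φ i) (φ i))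
    (η : ℝ) (hη : 0 < η)
    (Pβη : Matrix (Fin n) (Fin n) ℝ) (hPβη : Pβη ∈ CN n N)
    (hmin : ∀ P ∈ CN n N,
      freeEnergy β H Pβη + η⁻¹ * l1Norm Pβη ≤ freeEnergy β H P + η⁻¹ * l1Norm P) :
    0 ≤ freeEnergy β H Pβη - freeEnergy β H Pβ ∧
      freeEnergy β H Pβη - freeEnergy β H Pβ ≤ η⁻¹ * l1Norm Pβ := by
  have hβinv : (0:ℝ) < β⁻¹ := inv_pos.mpr hβ
  set Φ : Matrix (Fin n) (Fin n) ℝ := Matrix.of (fun i j => φ j i) with hΦdef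
  have hΦ1 : Φᵀ * Φ = 1 := by
    ext i j
    have h := horth i j
    simp only [dotProduct] at h
    simp only [Matrix.mul_apply, Matrix.transpose_apply, hΦdef, Matrix.of_apply,
      Matrix.one_apply]
    exact h
  have hΦ2 : Φ * Φᵀ = 1 := mul_eq_one_comm.mp hΦ1
  have hHΦ : Φᵀ * H = Matrix.diagonal lam * Φᵀ := by
    ext i j
    rw [Matrix.mul_apply, Matrix.diagonal_mul]
    have h := congrFun (heig i) j
    simp only [Matrix.mulVec, dotProduct, Pi.smul_apply, smul_eq_mul] at h
    simp only [Matrix.transpose_apply, hΦdef, Matrix.of_apply]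
    rw [← h]
    refine Finset.sum_congr rfl (fun k _ => ?_)
    rw [hH.apply k j]
    ring
  have htr : ∀ M : Matrix (Fin n) (Fin n) ℝ, M.trace = ∑ i, (Φᵀ * M * Φ) i i := by
    intro M
    have h : (Φᵀ * M * Φ).trace = M.trace := by
      rw [Matrix.trace_mul_cycle, hΦ2, Matrix.one_mul]
    rw [← h]
    simp [Matrix.trace, Matrix.diag]
  have hHtr : ∀ M : Matrix (Fin n) (Fin n) ℝ,
      (H * M).trace = ∑ i, lam i * ((Φᵀ * M * Φ) i i) := by
    intro M
    rw [htr (H * M)]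
    have h : Φᵀ * (H * M) * Φ = Matrix.diagonal lam * (Φᵀ * M * Φ) := by
      calc Φᵀ * (H * M) * Φ = (Φᵀ * H) * (M * Φ) := by simp only [Matrix.mul_assoc]
        _ = Matrix.diagonal lam * (Φᵀ * M * Φ) := by
            rw [hHΦ]; simp only [Matrix.mul_assoc]
    refine Finset.sum_congr rfl (fun i _ => ?_)
    rw [h, Matrix.diagonal_mul]
  have hPβd : Pβ = Φ * Matrix.diagonal ρ * Φᵀ := by
    rw [hPβ]
    ext i j
    rw [Matrix.mul_apply]
    simp only [Matrix.sum_apply, Matrix.smul_apply, Matrix.vecMulVec_apply, smul_eq_mul]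
    refine Finset.sum_congr rfl (fun k _ => ?_)
    rw [Matrix.mul_diagonal]
    simp only [Matrix.transpose_apply, hΦdef, Matrix.of_apply]
    ring
  -- properties of ρ
  have hρ0 : ∀ i, 0 ≤ ρ i := by
    intro i
    rw [hρ i]
    have : (0:ℝ) < 1 + Real.exp (β * (lam i - μ)) := by positivity
    positivity
  have hρ1 : ∀ i, ρ i ≤ 1 := by
    intro i
    rw [hρ i]
    have h1 : (1:ℝ) ≤ 1 + Real.exp (β * (lam i - μ)) := by
      have := Real.exp_pos (β * (lam i - μ)); linarith
    exact inv_le_one_of_one_le₀ h1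
  have hρsum : ∑ i, ρ i = (N : ℝ) := by
    rw [← hμ]
    exact Finset.sum_congr rfl (fun i _ => hρ i)
  -- Pβ ∈ CN
  have hΦPβΦ : Φᵀ * Pβ * Φ = Matrix.diagonal ρ := by
    rw [hPβd]
    calc Φᵀ * (Φ * Matrix.diagonal ρ * Φᵀ) * Φ
        = (Φᵀ * Φ) * Matrix.diagonal ρ * (Φᵀ * Φ) := by simp only [Matrix.mul_assoc]
      _ = Matrix.diagonal ρ := by rw [hΦ1]; simp
  have hPβsymm : Pβ.IsSymm := by
    rw [Matrix.IsSymm, hPβd]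
    rw [Matrix.transpose_mul, Matrix.transpose_mul, Matrix.transpose_transpose,
      Matrix.diagonal_transpose]
    simp only [Matrix.mul_assoc]
  have hPβherm : Pβ.IsHermitian := by
    rw [Matrix.IsHermitian, real_conjTranspose_eq_transpose]
    exact hPβsymm
  have hPβtrace : Pβ.trace = (N : ℝ) := by
    rw [htr Pβ, ← hρsum]
    refine Finset.sum_congr rfl (fun i _ => ?_)
    rw [hΦPβΦ, Matrix.diagonal_apply_eq]
  have hPβpsd : Pβ.PosSemidef := by
    rw [hPβd, ← real_conjTranspose_eq_transpose Φ]
    exact (Matrix.PosSemidef.diagonal hρ0).mul_mul_conjTranspose_same Φ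
  have hPβpsd1 : ((1 : Matrix (Fin n) (Fin n) ℝ) - Pβ).PosSemidef := by
    have h1 : (1 : Matrix (Fin n) (Fin n) ℝ) - Pβ
        = Φ * Matrix.diagonal (fun i => 1 - ρ i) * Φᵀ := by
      have : Matrix.diagonal (fun i => 1 - ρ i)
          = 1 - Matrix.diagonal ρ := by
        rw [← Matrix.diagonal_one, Matrix.diagonal_sub]
      rw [this, Matrix.mul_sub, Matrix.sub_mul, Matrix.mul_one, hΦ2, hPβd]
    rw [h1, ← real_conjTranspose_eq_transpose Φ]
    exact (Matrix.PosSemidef.diagonal (fun i => by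
      have := hρ1 i; simpa using sub_nonneg.mpr this)).mul_mul_conjTranspose_same Φ
  have hPβCN : Pβ ∈ CN n N := ⟨hPβsymm, hPβtrace, hPβpsd, hPβpsd1⟩
  -- the minimum value
  set F : Fin n → ℝ := fun i => -Real.log (1 + Real.exp (-(β * (lam i - μ)))) with hF
  set m : ℝ := (∑ i, β⁻¹ * F i) + μ * N with hm
  -- lower bound on free energy over CN
  have hlow : ∀ P ∈ CN n N, m ≤ freeEnergy β H P := by
    intro P hP
    obtain ⟨hs, htrP, hpsd, hpsd1⟩ := hP
    have hHerm : P.IsHermitian := by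
      rw [Matrix.IsHermitian, real_conjTranspose_eq_transpose]; exact hs
    set p : Fin n → ℝ := fun i => (Φᵀ * P * Φ) i i with hp
    have hp0 : ∀ i, 0 ≤ p i := fun i => quad_diag_nonneg hpsd Φ i
    have hp1 : ∀ i, p i ≤ 1 := by
      intro i
      have h := quad_diag_nonneg hpsd1 Φ i
      have hexp : Φᵀ * (1 - P) * Φ = 1 - Φᵀ * P * Φ := by
        rw [Matrix.mul_sub, Matrix.sub_mul, Matrix.mul_one, hΦ1]
      rw [hexp] at h
      have h2 : ((1 : Matrix (Fin n) (Fin n) ℝ) - Φᵀ * P * Φ) i i = 1 - p i := by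
        simp [Matrix.one_apply, hp]
      rw [h2] at h
      linarith
    have hpsum : ∑ i, p i = (N : ℝ) := by
      have h := (htr P).symm.trans htrP
      exact h
    have hent : ∑ i, fd (p i) ≤ matEntropy P :=
      matEntropy_ge hΦ1 hΦ2 hHerm hpsd hpsd1
    have hterm : ∀ i, β⁻¹ * F i + μ * p i ≤ lam i * p i + β⁻¹ * fd (p i) := by
      intro i
      have hk := key_scalar (β * (lam i - μ)) (hp0 i) (hp1 i)
      have h2 := mul_le_mul_of_nonneg_left hk hβinv.le
      have hexp : β⁻¹ * (β * (lam i - μ) * p i + fd (p i))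
          = (lam i - μ) * p i + β⁻¹ * fd (p i) := by
        field_simp
      rw [hexp] at h2
      simp only [hF]
      nlinarith [h2]
    calc m = ∑ i, (β⁻¹ * F i + μ * p i) := by
          have hmu : ∑ i, μ * p i = μ * (N:ℝ) := by rw [← Finset.mul_sum, hpsum]
          rw [Finset.sum_add_distrib, hmu, hm]
      _ ≤ ∑ i, (lam i * p i + β⁻¹ * fd (p i)) := Finset.sum_le_sum (fun i _ => hterm i)
      _ = (∑ i, lam i * p i) + β⁻¹ * ∑ i, fd (p i) := by
          rw [Finset.sum_add_distrib, ← Finset.mul_sum]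
      _ ≤ (H * P).trace + β⁻¹ * matEntropy P := by
          rw [hHtr P]
          exact add_le_add_right (mul_le_mul_of_nonneg_left hent hβinv.le) _
      _ = freeEnergy β H P := rfl
  -- upper bound for Pβ
  have hupp : freeEnergy β H Pβ ≤ m := by
    have hent : matEntropy Pβ ≤ ∑ i, fd (ρ i) :=
      matEntropy_le hΦ1 hΦ2 hρ0 hρ1 hPβd hPβherm
    have htrHPβ : (H * Pβ).trace = ∑ i, lam i * ρ i := by
      rw [hHtr Pβ]
      refine Finset.sum_congr rfl (fun i _ => ?_)
      rw [hΦPβΦ, Matrix.diagonal_apply_eq]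
    have hterm : ∀ i, lam i * ρ i + β⁻¹ * fd (ρ i) = β⁻¹ * F i + μ * ρ i := by
      intro i
      have he := fd_eq_at_rho (β * (lam i - μ))
      rw [← hρ i] at he
      have h2 : β⁻¹ * (β * (lam i - μ) * ρ i + fd (ρ i)) = β⁻¹ * F i := by
        rw [he, hF]
      have hexp : β⁻¹ * (β * (lam i - μ) * ρ i + fd (ρ i))
          = (lam i - μ) * ρ i + β⁻¹ * fd (ρ i) := by
        field_simp
      rw [hexp] at h2
      nlinarith [h2]
    calc freeEnergy β H Pβ = (H * Pβ).trace + β⁻¹ * matEntropy Pβ := rfl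
      _ ≤ (∑ i, lam i * ρ i) + β⁻¹ * ∑ i, fd (ρ i) := by
          rw [htrHPβ]
          exact add_le_add_right (mul_le_mul_of_nonneg_left hent hβinv.le) _
      _ = ∑ i, (lam i * ρ i + β⁻¹ * fd (ρ i)) := by
          rw [Finset.sum_add_distrib, ← Finset.mul_sum]
      _ = ∑ i, (β⁻¹ * F i + μ * ρ i) := Finset.sum_congr rfl (fun i _ => hterm i)
      _ = m := by
          have hmu : ∑ i, μ * ρ i = μ * (N:ℝ) := by rw [← Finset.mul_sum, hρsum]
          rw [Finset.sum_add_distrib, hmu, hm]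
  constructor
  · have h1 := hlow Pβη hPβη
    linarith
  · have h1 := hmin Pβ hPβCN
    have h2 : 0 ≤ l1Norm Pβη :=
      Finset.sum_nonneg (fun i _ => Finset.sum_nonneg (fun j _ => abs_nonneg _))
    have h3 : 0 ≤ η⁻¹ * l1Norm Pβη := mul_nonneg (inv_nonneg.mpr hη.le) h2
    linarith
end

section
/- Let β, λ, r > 0 and let H, Q, R, B, D be n×n real symmetric matrices. For a real symmetric matrix Y define Φ_β(Y) = (I + exp(βY))⁻¹, where exp is the matrix exponential (I + exp(βY) is positive definite, hence invertible). Suppose Z* is a real symmetric matrix satisfying Z* = Φ_β( H + λ(Z* − Q + B) + r(Z* − R + D) ), and let the sequence (Z^l) of symmetric matrices be defined by a symmetric initial matrix Z^0 and Z^{l+1} = Φ_β( H + λ(Z^l − Q + B) + r(Z^l − R + D) ). Then for every l ≥ 0, ‖Z^l − Z*‖_F ≤ (β(λ+r)/4)^l · ‖Z^0 − Z*‖_F. In particular, if β(λ+r) < 4 then Z^l converges to Z* exponentially fast as l → ∞. -/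
open Matrix BigOperators

/-- Frobenius norm of a real matrix. -/
noncomputable def frobNorm {n : ℕ} (P : Matrix (Fin n) (Fin n) ℝ) : ℝ :=
  Real.sqrt (∑ i, ∑ j, (P i j) ^ 2)

/-- The matrix Fermi–Dirac function `Φ_β(Y) = (I + exp(βY))⁻¹`, defined via the
matrix exponential and the matrix inverse (for symmetric `Y`, `I + exp(βY)` is
positive definite, hence invertible). -/
noncomputable def fermiDirac {n : ℕ} (β : ℝ) (Y : Matrix (Fin n) (Fin n) ℝ) :
    Matrix (Fin n) (Fin n) ℝ :=
  (1 + NormedSpace.exp (β • Y))⁻¹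

noncomputable def frobSq {n : ℕ} (P : Matrix (Fin n) (Fin n) ℝ) : ℝ :=
  ∑ i, ∑ j, (P i j) ^ 2

lemma frobSq_nonneg {n : ℕ} (P : Matrix (Fin n) (Fin n) ℝ) : 0 ≤ frobSq P :=
  Finset.sum_nonneg fun _ _ => Finset.sum_nonneg fun _ _ => sq_nonneg _

lemma frobNorm_eq {n : ℕ} (P : Matrix (Fin n) (Fin n) ℝ) :
    frobNorm P = Real.sqrt (frobSq P) := rfl

lemma frobNorm_nonneg {n : ℕ} (P : Matrix (Fin n) (Fin n) ℝ) : 0 ≤ frobNorm P :=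
  Real.sqrt_nonneg _

lemma frobSq_eq_trace {n : ℕ} (P : Matrix (Fin n) (Fin n) ℝ) :
    frobSq P = Matrix.trace (Pᵀ * P) := by
  simp only [frobSq, Matrix.trace, Matrix.diag, Matrix.mul_apply, Matrix.transpose_apply]
  rw [Finset.sum_comm]
  congr 1; ext i; congr 1; ext j; ring

lemma frobSq_conj {n : ℕ} (U V P : Matrix (Fin n) (Fin n) ℝ)
    (hU : U * Uᵀ = 1) (hV : V * Vᵀ = 1) :
    frobSq (Uᵀ * P * V) = frobSq P := by
  rw [frobSq_eq_trace, frobSq_eq_trace]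
  have : (Uᵀ * P * V)ᵀ * (Uᵀ * P * V) = Vᵀ * (Pᵀ * P) * V := by
    simp only [Matrix.transpose_mul, Matrix.transpose_transpose]
    rw [show Vᵀ * (Pᵀ * U) * (Uᵀ * P * V) = Vᵀ * Pᵀ * (U * Uᵀ) * P * V by noncomm_ring,
      hU]
    noncomm_ring
  rw [this, Matrix.trace_mul_comm, ← mul_assoc, hV, one_mul]

lemma frobNorm_smul {n : ℕ} (c : ℝ) (hc : 0 ≤ c) (P : Matrix (Fin n) (Fin n) ℝ) :
    frobNorm (c • P) = c * frobNorm P := by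
  have : frobSq (c • P) = c ^ 2 * frobSq P := by
    simp only [frobSq, Matrix.smul_apply, smul_eq_mul, mul_pow, Finset.mul_sum]
  rw [frobNorm_eq, frobNorm_eq, this, Real.sqrt_mul (sq_nonneg c), Real.sqrt_sq hc]

lemma entry_le_frobNorm {n : ℕ} (P : Matrix (Fin n) (Fin n) ℝ) (i j : Fin n) :
    |P i j| ≤ frobNorm P := by
  rw [frobNorm_eq, ← Real.sqrt_sq_eq_abs]
  apply Real.sqrt_le_sqrt
  calc P i j ^ 2 ≤ ∑ j', (P i j') ^ 2 :=
        Finset.single_le_sum (f := fun j' => P i j' ^ 2)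
          (fun _ _ => sq_nonneg _) (Finset.mem_univ j)
    _ ≤ frobSq P :=
        Finset.single_le_sum (f := fun i' => ∑ j', (P i' j') ^ 2)
          (fun _ _ => Finset.sum_nonneg fun _ _ => sq_nonneg _) (Finset.mem_univ i)

lemma scalar_lip (β : ℝ) (hβ : 0 < β) (x y : ℝ) :
    |(1 + Real.exp (β * x))⁻¹ - (1 + Real.exp (β * y))⁻¹| ≤ β / 4 * |x - y| := by
  have hpos : ∀ t : ℝ, (0:ℝ) < 1 + Real.exp (β * t) := fun t => by positivity
  have hd : ∀ t : ℝ, HasDerivAt (fun s => (1 + Real.exp (β * s))⁻¹)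
      (-(Real.exp (β * t) * β) / (1 + Real.exp (β * t)) ^ 2) t := by
    intro t
    have h1 : HasDerivAt (fun s : ℝ => β * s) β t := by
      simpa using (hasDerivAt_id t).const_mul β
    have h2 : HasDerivAt (fun s : ℝ => Real.exp (β * s)) (Real.exp (β * t) * β) t :=
      (Real.hasDerivAt_exp (β * t)).comp t h1
    have h3 : HasDerivAt (fun s : ℝ => 1 + Real.exp (β * s)) (Real.exp (β * t) * β) t :=
      h2.const_add 1
    exact h3.inv (ne_of_gt (hpos t))
  have key := Convex.norm_image_sub_le_of_norm_deriv_le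
    (f := fun s : ℝ => (1 + Real.exp (β * s))⁻¹) (C := β / 4) (s := Set.univ)
    (fun t _ => (hd t).differentiableAt)
    (fun t _ => by
      rw [(hd t).deriv]
      have he := Real.exp_pos (β * t)
      rw [Real.norm_eq_abs, abs_div, abs_neg, abs_of_nonneg (by positivity),
        abs_of_nonneg (by positivity)]
      rw [div_le_div_iff₀ (by positivity) (by norm_num)]
      nlinarith [sq_nonneg (1 - Real.exp (β * t)), he])
    convex_univ (Set.mem_univ y) (Set.mem_univ x)
  simpa [Real.norm_eq_abs] using key

lemma fd_spectral {n : ℕ} (β : ℝ) (X : Matrix (Fin n) (Fin n) ℝ) (hX : X.IsSymm) :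
    ∃ (U : Matrix (Fin n) (Fin n) ℝ) (a : Fin n → ℝ),
      U * Uᵀ = 1 ∧ Uᵀ * U = 1 ∧ X = U * Matrix.diagonal a * Uᵀ ∧
      fermiDirac β X = U * Matrix.diagonal (fun i => (1 + Real.exp (β * a i))⁻¹) * Uᵀ := by
  have hH : X.IsHermitian := by
    rwa [Matrix.IsHermitian, Matrix.conjTranspose_eq_transpose_of_trivial]
  set U : Matrix (Fin n) (Fin n) ℝ := (hH.eigenvectorUnitary : Matrix (Fin n) (Fin n) ℝ)
  set a : Fin n → ℝ := hH.eigenvalues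
  have hmem := hH.eigenvectorUnitary.2
  have hU1 : U * Uᵀ = 1 := by
    have := (Matrix.mem_unitaryGroup_iff).mp hmem
    simpa [Matrix.star_eq_conjTranspose,
      Matrix.conjTranspose_eq_transpose_of_trivial] using this
  have hU2 : Uᵀ * U = 1 := by
    have := (Matrix.mem_unitaryGroup_iff').mp hmem
    simpa [Matrix.star_eq_conjTranspose,
      Matrix.conjTranspose_eq_transpose_of_trivial] using this
  have hspec : X = U * Matrix.diagonal a * Uᵀ := by
    have := hH.spectral_theorem
    simpa [Matrix.star_eq_conjTranspose,
      Matrix.conjTranspose_eq_transpose_of_trivial, Function.comp] using this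
  refine ⟨U, a, hU1, hU2, hspec, ?_⟩
  have hUnit : IsUnit U := ⟨⟨U, Uᵀ, hU1, hU2⟩, rfl⟩
  have hUinv : U⁻¹ = Uᵀ := Matrix.inv_eq_right_inv hU1
  have hsmul : β • X = U * Matrix.diagonal (fun i => β * a i) * U⁻¹ := by
    rw [hUinv, hspec, show (fun i => β * a i) = β • a from rfl, Matrix.diagonal_smul,
      Matrix.mul_smul, Matrix.smul_mul]
  have hexp : NormedSpace.exp (β • X)
      = U * Matrix.diagonal (fun i => Real.exp (β * a i)) * Uᵀ := by
    rw [hsmul, Matrix.exp_conj U _ hUnit, Matrix.exp_diagonal, hUinv]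
    congr 2
    rw [Pi.exp_def]
    ext i
    rw [Real.exp_eq_exp_ℝ]
  have hsum : 1 + NormedSpace.exp (β • X)
      = U * Matrix.diagonal (fun i => 1 + Real.exp (β * a i)) * Uᵀ := by
    rw [hexp]
    have h2 : Matrix.diagonal (fun i => 1 + Real.exp (β * a i))
        = 1 + Matrix.diagonal (fun i => Real.exp (β * a i)) := by
      ext i j
      by_cases h : i = j <;> simp [Matrix.diagonal, Matrix.one_apply, h]
    rw [h2, Matrix.mul_add, Matrix.add_mul, mul_one, hU1]
  have hpos : ∀ i, (0:ℝ) < 1 + Real.exp (β * a i) := fun i => by positivity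
  rw [fermiDirac, hsum]
  apply Matrix.inv_eq_right_inv
  calc U * Matrix.diagonal (fun i => 1 + Real.exp (β * a i)) * Uᵀ *
        (U * Matrix.diagonal (fun i => (1 + Real.exp (β * a i))⁻¹) * Uᵀ)
      = U * (Matrix.diagonal (fun i => 1 + Real.exp (β * a i)) * (Uᵀ * U) *
          Matrix.diagonal (fun i => (1 + Real.exp (β * a i))⁻¹)) * Uᵀ := by
        noncomm_ring
    _ = 1 := by
        rw [hU2, mul_one, Matrix.diagonal_mul_diagonal]
        have : (fun i => (1 + Real.exp (β * a i)) * (1 + Real.exp (β * a i))⁻¹)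
            = fun _ => (1:ℝ) := by
          ext i; exact mul_inv_cancel₀ (ne_of_gt (hpos i))
        rw [this, Matrix.diagonal_one, mul_one, hU1]

lemma fd_symm {n : ℕ} (β : ℝ) (X : Matrix (Fin n) (Fin n) ℝ) (hX : X.IsSymm) :
    (fermiDirac β X).IsSymm := by
  obtain ⟨U, a, hU1, hU2, _, hXf⟩ := fd_spectral β X hX
  rw [Matrix.IsSymm, hXf]
  simp only [Matrix.transpose_mul, Matrix.transpose_transpose, Matrix.diagonal_transpose]
  noncomm_ring

lemma fd_lip {n : ℕ} {β : ℝ} (hβ : 0 < β) (X Y : Matrix (Fin n) (Fin n) ℝ)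
    (hX : X.IsSymm) (hY : Y.IsSymm) :
    frobNorm (fermiDirac β X - fermiDirac β Y) ≤ β / 4 * frobNorm (X - Y) := by
  obtain ⟨U, a, hU1, hU2, hXs, hXf⟩ := fd_spectral β X hX
  obtain ⟨V, b, hV1, hV2, hYs, hYf⟩ := fd_spectral β Y hY
  set W := Uᵀ * V with hW
  set ga : Fin n → ℝ := fun i => (1 + Real.exp (β * a i))⁻¹ with hga
  set gb : Fin n → ℝ := fun i => (1 + Real.exp (β * b i))⁻¹ with hgb
  have key : ∀ (P : Matrix (Fin n) (Fin n) ℝ) (d e : Fin n → ℝ),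
      P = U * Matrix.diagonal d * Uᵀ → True → True →
      Uᵀ * P * V = Matrix.diagonal d * W := by
    intro P d e hP _ _
    rw [hP, show Uᵀ * (U * Matrix.diagonal d * Uᵀ) * V
        = (Uᵀ * U) * Matrix.diagonal d * (Uᵀ * V) by noncomm_ring, hU2, one_mul]
  have key2 : ∀ (P : Matrix (Fin n) (Fin n) ℝ) (e : Fin n → ℝ),
      P = V * Matrix.diagonal e * Vᵀ →
      Uᵀ * P * V = W * Matrix.diagonal e := by
    intro P e hP
    rw [hP, show Uᵀ * (V * Matrix.diagonal e * Vᵀ) * V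
        = (Uᵀ * V) * Matrix.diagonal e * (Vᵀ * V) by noncomm_ring, hV2, mul_one]
  have hfd : Uᵀ * (fermiDirac β X - fermiDirac β Y) * V
      = Matrix.diagonal ga * W - W * Matrix.diagonal gb := by
    rw [Matrix.mul_sub, Matrix.sub_mul, key _ ga gb hXf trivial trivial, key2 _ gb hYf]
  have hdiff : Uᵀ * (X - Y) * V = Matrix.diagonal a * W - W * Matrix.diagonal b := by
    rw [Matrix.mul_sub, Matrix.sub_mul, key _ a b hXs trivial trivial, key2 _ b hYs]
  have e1 : frobSq (fermiDirac β X - fermiDirac β Y)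
      = ∑ i, ∑ j, ((ga i - gb j) * W i j) ^ 2 := by
    rw [← frobSq_conj U V _ hU1 hV1, hfd]
    simp only [frobSq, Matrix.sub_apply, Matrix.diagonal_mul, Matrix.mul_diagonal]
    exact Finset.sum_congr rfl fun i _ => Finset.sum_congr rfl fun j _ => by ring
  have e2 : frobSq (X - Y) = ∑ i, ∑ j, ((a i - b j) * W i j) ^ 2 := by
    rw [← frobSq_conj U V _ hU1 hV1, hdiff]
    simp only [frobSq, Matrix.sub_apply, Matrix.diagonal_mul, Matrix.mul_diagonal]
    exact Finset.sum_congr rfl fun i _ => Finset.sum_congr rfl fun j _ => by ring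
  have hle : frobSq (fermiDirac β X - fermiDirac β Y)
      ≤ (β / 4) ^ 2 * frobSq (X - Y) := by
    rw [e1, e2, Finset.mul_sum]
    refine Finset.sum_le_sum fun i _ => ?_
    rw [Finset.mul_sum]
    refine Finset.sum_le_sum fun j _ => ?_
    have h := scalar_lip β hβ (a i) (b j)
    have h2 : (ga i - gb j) ^ 2 ≤ (β / 4) ^ 2 * (a i - b j) ^ 2 := by
      have h3 : |ga i - gb j| ^ 2 ≤ (β / 4 * |a i - b j|) ^ 2 :=
        pow_le_pow_left₀ (abs_nonneg _) h 2
      calc (ga i - gb j) ^ 2 = |ga i - gb j| ^ 2 := (sq_abs _).symm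
        _ ≤ (β / 4 * |a i - b j|) ^ 2 := h3
        _ = (β / 4) ^ 2 * (a i - b j) ^ 2 := by rw [mul_pow, sq_abs]
    calc ((ga i - gb j) * W i j) ^ 2 = (ga i - gb j) ^ 2 * W i j ^ 2 := by ring
      _ ≤ (β / 4) ^ 2 * (a i - b j) ^ 2 * W i j ^ 2 :=
          mul_le_mul_of_nonneg_right h2 (sq_nonneg _)
      _ = (β / 4) ^ 2 * ((a i - b j) * W i j) ^ 2 := by ring
  have hb4 : (0:ℝ) ≤ β / 4 := by positivity
  calc frobNorm (fermiDirac β X - fermiDirac β Y)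
      = Real.sqrt (frobSq (fermiDirac β X - fermiDirac β Y)) := rfl
    _ ≤ Real.sqrt ((β / 4) ^ 2 * frobSq (X - Y)) := Real.sqrt_le_sqrt hle
    _ = β / 4 * frobNorm (X - Y) := by
        rw [Real.sqrt_mul (sq_nonneg _), Real.sqrt_sq hb4, frobNorm_eq]

/-- Convergence of the fixed-point iteration
`Z^{l+1} = Φ_β(H + λ(Z^l − Q + B) + r(Z^l − R + D))` to the fixed point `Z*`:
`‖Z^l − Z*‖_F ≤ (β(λ+r)/4)^l ‖Z^0 − Z*‖_F`, which shows exponential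
convergence whenever `β(λ+r) < 4`. -/
theorem stmt15 {n : ℕ} (β lam r : ℝ) (hβ : 0 < β) (hlam : 0 < lam) (hr : 0 < r)
    (H Q R B D : Matrix (Fin n) (Fin n) ℝ)
    (hH : H.IsSymm) (hQ : Q.IsSymm) (hR : R.IsSymm) (hB : B.IsSymm) (hD : D.IsSymm)
    (Zstar : Matrix (Fin n) (Fin n) ℝ) (hZstarSymm : Zstar.IsSymm)
    (hZstar : Zstar = fermiDirac β (H + lam • (Zstar - Q + B) + r • (Zstar - R + D)))
    (Z : ℕ → Matrix (Fin n) (Fin n) ℝ) (hZ0 : (Z 0).IsSymm)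
    (hZrec : ∀ l : ℕ,
      Z (l + 1) = fermiDirac β (H + lam • (Z l - Q + B) + r • (Z l - R + D))) :
    (∀ l : ℕ, frobNorm (Z l - Zstar) ≤ (β * (lam + r) / 4) ^ l * frobNorm (Z 0 - Zstar)) ∧
      (β * (lam + r) < 4 → Filter.Tendsto Z Filter.atTop (nhds Zstar)) := by
  set F : Matrix (Fin n) (Fin n) ℝ → Matrix (Fin n) (Fin n) ℝ :=
    fun S => H + lam • (S - Q + B) + r • (S - R + D) with hF
  have hFsymm : ∀ S : Matrix (Fin n) (Fin n) ℝ, S.IsSymm → (F S).IsSymm := by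
    intro S hS
    simp only [hF, Matrix.IsSymm, Matrix.transpose_add, Matrix.transpose_sub,
      Matrix.transpose_smul]
    rw [hS, hH, hQ, hR, hB, hD]
  have hFdiff : ∀ S T : Matrix (Fin n) (Fin n) ℝ, F S - F T = (lam + r) • (S - T) := by
    intro S T
    simp only [hF]
    module
  have hsymm : ∀ l, (Z l).IsSymm := by
    intro l
    induction l with
    | zero => exact hZ0
    | succ l ih =>
        rw [hZrec l]
        exact fd_symm β _ (hFsymm _ ih)
  set q : ℝ := β * (lam + r) / 4 with hq
  have hq0 : 0 ≤ q := by positivity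
  have hstep : ∀ l, frobNorm (Z (l + 1) - Zstar) ≤ q * frobNorm (Z l - Zstar) := by
    intro l
    rw [hZrec l]
    nth_rewrite 1 [hZstar]
    calc frobNorm (fermiDirac β (F (Z l)) - fermiDirac β (F Zstar))
        ≤ β / 4 * frobNorm (F (Z l) - F Zstar) :=
          fd_lip hβ _ _ (hFsymm _ (hsymm l)) (hFsymm _ hZstarSymm)
      _ = β / 4 * ((lam + r) * frobNorm (Z l - Zstar)) := by
          rw [hFdiff, frobNorm_smul _ (by positivity)]
      _ = q * frobNorm (Z l - Zstar) := by rw [hq]; ring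
  have hbound : ∀ l, frobNorm (Z l - Zstar) ≤ q ^ l * frobNorm (Z 0 - Zstar) := by
    intro l
    induction l with
    | zero => simp
    | succ l ih =>
        calc frobNorm (Z (l + 1) - Zstar) ≤ q * frobNorm (Z l - Zstar) := hstep l
          _ ≤ q * (q ^ l * frobNorm (Z 0 - Zstar)) :=
              mul_le_mul_of_nonneg_left ih hq0
          _ = q ^ (l + 1) * frobNorm (Z 0 - Zstar) := by ring
  refine ⟨hbound, fun hlt => ?_⟩
  have hq1 : q < 1 := by rw [hq]; linarith
  have hgeo : Filter.Tendsto (fun l => q ^ l * frobNorm (Z 0 - Zstar))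
      Filter.atTop (nhds 0) := by
    have := tendsto_pow_atTop_nhds_zero_of_lt_one hq0 hq1
    simpa using this.mul_const (frobNorm (Z 0 - Zstar))
  have hfrob : Filter.Tendsto (fun l => frobNorm (Z l - Zstar)) Filter.atTop (nhds 0) :=
    squeeze_zero (fun l => frobNorm_nonneg _) hbound hgeo
  apply tendsto_pi_nhds.mpr
  intro i
  rw [tendsto_pi_nhds]
  intro j
  rw [tendsto_iff_dist_tendsto_zero]
  apply squeeze_zero (fun l => dist_nonneg) (fun l => ?_) hfrob
  rw [Real.dist_eq]
  have := entry_le_frobNorm (Z l - Zstar) i j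
  rwa [Matrix.sub_apply] at this
end
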